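/- Let V be in the class 𝒞 and let b ≤ b' and c ≤ c' be real numbers. Then there exists u_0 ∈ ℝ such that ρ_{b',c'}(u) ≤ ρ_{b,c}(u) for all u ≤ u_0 and ρ_{b',c'}(u) ≥ ρ_{b,c}(u) for all u ≥ u_0 (a single-crossing property). Consequently, the distribution functions F_{b,c}(t) = ∫_{−∞}^t ρ_{b,c}(u) du satisfy F_{b,c}(t) ≥ F_{b',c'}(t) for all t ∈ ℝ. -/

import Mathlib

open MeasureTheory Filter Real

noncomputable section

/-- The class 𝒞 of potentials: convex, at most polynomial growth, non-affine
(the asymptotic slopes at `+∞` and `-∞`, taken in the extended reals, differ). -/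
structure InClassC (V : ℝ → ℝ) : Prop where
  convex : ConvexOn ℝ Set.univ V
  growth : ∃ C > (0 : ℝ), ∃ K : ℝ, 1 ≤ K ∧ ∀ x : ℝ, |V x| ≤ C * (1 + |x|) ^ K
  slopes : ∃ vm vp : EReal,
    Tendsto (fun x : ℝ => ((V x / x : ℝ) : EReal)) atBot (nhds vm) ∧
    Tendsto (fun x : ℝ => ((V x / x : ℝ) : EReal)) atTop (nhds vp) ∧
    vm < vp

/-- The resampling density `ρ_{b,c}`. -/
def rho (V : ℝ → ℝ) (b c u : ℝ) : ℝ :=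
  Real.exp (-(V (u - b) + V (c - u))) / ∫ s : ℝ, Real.exp (-(V (s - b) + V (c - s)))

namespace SingleCrossingAux

lemma integrable_exp_neg_abs {a : ℝ} (ha : 0 < a) :
    Integrable (fun x : ℝ => Real.exp (-(a * |x|))) := by
  have h1 : IntegrableOn (fun x : ℝ => Real.exp (-(a * |x|))) (Set.Ioi 0) := by
    refine (exp_neg_integrableOn_Ioi 0 ha).congr_fun (fun x hx => ?_) measurableSet_Ioi
    simp only [abs_of_pos (Set.mem_Ioi.mp hx), neg_mul]
  have h2 : IntegrableOn (fun x : ℝ => Real.exp (-(a * |x|))) (Set.Iic 0) := by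
    rw [← Measure.map_neg_eq_self (volume : Measure ℝ)]
    have m : MeasurableEmbedding fun x : ℝ => -x :=
      (Homeomorph.neg ℝ).measurableEmbedding
    rw [m.integrableOn_map_iff]
    simp_rw [Function.comp_def, abs_neg, Set.neg_preimage, Set.neg_Iic, neg_zero]
    exact (integrableOn_Ici_iff_integrableOn_Ioi).mpr h1
  have := h2.union h1
  rwa [Set.Iic_union_Ioi, integrableOn_univ] at this

lemma cont_of_classC {V : ℝ → ℝ} (hV : InClassC V) : Continuous V := by
  have h := hV.convex.continuousOn isOpen_univ
  rwa [continuousOn_univ] at h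

/-- Global linear lower bounds with two different slopes. -/
lemma lower_bound {V : ℝ → ℝ} (hV : InClassC V) :
    ∃ r1 r2 M : ℝ, r1 < r2 ∧ (∀ x, r1 * x - M ≤ V x) ∧ (∀ x, r2 * x - M ≤ V x) := by
  obtain ⟨vm, vp, hm, hp, hlt⟩ := hV.slopes
  obtain ⟨r2, h2m, h2p⟩ := EReal.exists_between_coe_real hlt
  obtain ⟨r1, h1m, h1p⟩ := EReal.exists_between_coe_real h2m
  have hr12 : r1 < r2 := by exact_mod_cast h1p
  have htop : ∀ᶠ x : ℝ in atTop, max (r1 * x) (r2 * x) ≤ V x := by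
    have h1 : ∀ᶠ x : ℝ in atTop, (r2 : EReal) < ((V x / x : ℝ) : EReal) :=
      hp.eventually_const_lt h2p
    filter_upwards [h1, eventually_ge_atTop (1 : ℝ)] with x hx hx1
    have hx0 : (0 : ℝ) < x := by linarith
    have : r2 < V x / x := by exact_mod_cast hx
    have h2 : r2 * x ≤ V x := ((lt_div_iff₀ hx0).mp this).le
    have h1' : r1 * x ≤ r2 * x := by nlinarith
    exact max_le (h1'.trans h2) h2
  have hbot : ∀ᶠ x : ℝ in atBot, max (r1 * x) (r2 * x) ≤ V x := by
    have h1 : ∀ᶠ x : ℝ in atBot, ((V x / x : ℝ) : EReal) < (r1 : EReal) :=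
      hm.eventually_lt_const h1m
    filter_upwards [h1, eventually_le_atBot (-1 : ℝ)] with x hx hx1
    have hx0 : x < 0 := by linarith
    have : V x / x < r1 := by exact_mod_cast hx
    have h2 : r1 * x ≤ V x := ((div_lt_iff_of_neg hx0).mp this).le
    have h1' : r2 * x ≤ r1 * x := by nlinarith
    exact max_le h2 (h1'.trans h2)
  obtain ⟨X2, hX2⟩ := eventually_atTop.mp htop
  obtain ⟨X1, hX1⟩ := eventually_atBot.mp hbot
  have hcont : Continuous fun x => max (r1 * x) (r2 * x) - V x := by
    exact ((continuous_const.mul continuous_id).max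
      (continuous_const.mul continuous_id)).sub (cont_of_classC hV)
  have hcomp : BddAbove ((fun x => max (r1 * x) (r2 * x) - V x) '' Set.Icc X1 X2) :=
    (isCompact_Icc.image hcont).bddAbove
  obtain ⟨M0, hM0⟩ := hcomp
  refine ⟨r1, r2, max M0 0, hr12, ?_, ?_⟩ <;> intro x <;>
  · have key : max (r1 * x) (r2 * x) - max M0 0 ≤ V x := by
      rcases le_total x X1 with h | h
      · have := hX1 x h
        have : (0:ℝ) ≤ max M0 0 := le_max_right _ _
        linarith [hX1 x h]
      · rcases le_total X2 x with h' | h'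
        · have : (0:ℝ) ≤ max M0 0 := le_max_right _ _
          linarith [hX2 x h']
        · have hmem : x ∈ Set.Icc X1 X2 := ⟨h, h'⟩
          have := hM0 (Set.mem_image_of_mem _ hmem)
          have h2 : M0 ≤ max M0 0 := le_max_left _ _
          have : max (r1 * x) (r2 * x) - V x ≤ M0 := this
          linarith
    have h1 : r1 * x ≤ max (r1 * x) (r2 * x) := le_max_left _ _
    have h2 : r2 * x ≤ max (r1 * x) (r2 * x) := le_max_right _ _
    linarith

lemma integrable_exp_W {V : ℝ → ℝ} (hV : InClassC V) (b c : ℝ) :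
    Integrable (fun u : ℝ => Real.exp (-(V (u - b) + V (c - u)))) := by
  obtain ⟨r1, r2, M, hr, h1, h2⟩ := lower_bound hV
  have hε : 0 < r2 - r1 := sub_pos.mpr hr
  have hVc := cont_of_classC hV
  have hcont : Continuous fun u : ℝ => Real.exp (-(V (u - b) + V (c - u))) := by
    exact (((hVc.comp (continuous_id.sub continuous_const)).add
      (hVc.comp (continuous_const.sub continuous_id))).neg).rexp
  set A : ℝ := 2 * M + max (r2 * b - r1 * c) (r1 * b - r2 * c) with hA
  refine Integrable.mono' ((integrable_exp_neg_abs hε).const_mul (Real.exp A))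
    hcont.aestronglyMeasurable ?_
  refine ae_of_all _ fun u => ?_
  rw [Real.norm_eq_abs, abs_of_pos (exp_pos _), ← Real.exp_add]
  rw [Real.exp_le_exp]
  rcases le_total 0 u with hu | hu
  · rw [abs_of_nonneg hu]
    have i1 := h2 (u - b)
    have i2 := h1 (c - u)
    have i3 : r2 * b - r1 * c ≤ max (r2 * b - r1 * c) (r1 * b - r2 * c) := le_max_left _ _
    nlinarith
  · rw [abs_of_nonpos hu]
    have i1 := h1 (u - b)
    have i2 := h2 (c - u)
    have i3 : r1 * b - r2 * c ≤ max (r2 * b - r1 * c) (r1 * b - r2 * c) := le_max_right _ _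
    nlinarith

lemma Z_pos {V : ℝ → ℝ} (hV : InClassC V) (b c : ℝ) :
    0 < ∫ s : ℝ, Real.exp (-(V (s - b) + V (c - s))) := by
  rw [integral_pos_iff_support_of_nonneg (fun u => (exp_pos _).le) (integrable_exp_W hV b c)]
  have : (Function.support fun u : ℝ => Real.exp (-(V (u - b) + V (c - u)))) = Set.univ :=
    Set.eq_univ_of_forall fun u => (exp_pos _).ne'
  rw [this]
  simp

lemma integral_rho_one {V : ℝ → ℝ} (hV : InClassC V) (b c : ℝ) :
    ∫ u : ℝ, rho V b c u = 1 := by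
  unfold rho
  rw [integral_div, div_self (Z_pos hV b c).ne']

lemma integrable_rho {V : ℝ → ℝ} (hV : InClassC V) (b c : ℝ) :
    Integrable (rho V b c) :=
  (integrable_exp_W hV b c).div_const _

lemma continuous_rho {V : ℝ → ℝ} (hV : InClassC V) (b c : ℝ) :
    Continuous (rho V b c) := by
  have hVc := cont_of_classC hV
  exact ((((hVc.comp (continuous_id.sub continuous_const)).add
    (hVc.comp (continuous_const.sub continuous_id))).neg).rexp).div_const _

/-- The increment of a convex function over an interval of fixed nonnegative length
is monotone. -/
lemma convex_increment {V : ℝ → ℝ} (hV : ConvexOn ℝ Set.univ V) {d : ℝ} (hd : 0 ≤ d)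
    {x y : ℝ} (hxy : x ≤ y) : V (x + d) - V x ≤ V (y + d) - V y := by
  set s : ℝ := y + d - x with hs
  have hs0 : 0 ≤ s := by simp only [hs]; linarith
  rcases eq_or_lt_of_le hs0 with h | h
  · have hd0 : d = 0 := by simp only [hs] at h; linarith
    have hxy0 : x = y := by simp only [hs] at h; linarith
    simp [hd0, hxy0]
  · set t : ℝ := d / s with ht
    have ht0 : 0 ≤ t := div_nonneg hd hs0
    have ht1 : t ≤ 1 := by
      rw [ht, div_le_one h]
      simp only [hs]; linarith
    have hts : t * s = d := div_mul_cancel₀ d h.ne'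
    have e1 : x + d = (1 - t) * x + t * (y + d) := by
      have : (1 - t) * x + t * (y + d) = x + t * s := by simp only [hs]; ring
      rw [this, hts]
    have e2 : y = t * x + (1 - t) * (y + d) := by
      have : t * x + (1 - t) * (y + d) = (y + d) - t * s := by simp only [hs]; ring
      rw [this, hts]; ring
    have c1 := hV.2 (Set.mem_univ x) (Set.mem_univ (y + d)) (by linarith : (0:ℝ) ≤ 1 - t)
      ht0 (by ring)
    have c2 := hV.2 (Set.mem_univ x) (Set.mem_univ (y + d)) ht0
      (by linarith : (0:ℝ) ≤ 1 - t) (by ring)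
    simp only [smul_eq_mul] at c1 c2
    rw [← e1] at c1
    rw [← e2] at c2
    linarith

/-- If one density dominates the other pointwise, they are equal. -/
lemma eq_of_pointwise_le {V : ℝ → ℝ} (hV : InClassC V) (b c b' c' : ℝ)
    (hle : ∀ u, rho V b' c' u ≤ rho V b c u) : ∀ u, rho V b c u = rho V b' c' u := by
  have hint := integrable_rho hV b c
  have hint' := integrable_rho hV b' c'
  have hzero : ∫ u : ℝ, (rho V b c u - rho V b' c' u) = 0 := by
    rw [integral_sub hint hint', integral_rho_one hV, integral_rho_one hV, sub_self]
  have hae : (fun u => rho V b c u - rho V b' c' u) =ᵐ[volume] 0 :=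
    (integral_eq_zero_iff_of_nonneg (fun u => sub_nonneg.mpr (hle u))
      (hint.sub hint')).mp hzero
  have hc : Continuous fun u => rho V b c u - rho V b' c' u :=
    (continuous_rho hV b c).sub (continuous_rho hV b' c')
  have heq : (fun u => rho V b c u - rho V b' c' u) = 0 :=
    (Continuous.ae_eq_iff_eq volume hc continuous_const).mp hae
  intro u
  have := congrFun heq u
  simp only [Pi.zero_apply] at this
  linarith

end SingleCrossingAux

open SingleCrossingAux

/-- **Single-crossing property of the resampling densities.** For `V ∈ 𝒞`, `b ≤ b'` and `c ≤ c'`,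
the densities `ρ_{b',c'}` and `ρ_{b,c}` cross exactly once: there is `u₀` with
`ρ_{b',c'} ≤ ρ_{b,c}` on `(-∞,u₀]` and `ρ_{b',c'} ≥ ρ_{b,c}` on `[u₀,∞)`. Consequently the
distribution functions satisfy `F_{b,c}(t) ≥ F_{b',c'}(t)` for all `t`. -/
theorem single_crossing (V : ℝ → ℝ) (hV : InClassC V) (b b' c c' : ℝ)
    (hb : b ≤ b') (hc : c ≤ c') :
    (∃ u₀ : ℝ, (∀ u : ℝ, u ≤ u₀ → rho V b' c' u ≤ rho V b c u) ∧
      (∀ u : ℝ, u₀ ≤ u → rho V b c u ≤ rho V b' c' u)) ∧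
    ∀ t : ℝ, (∫ u in Set.Iic t, rho V b' c' u) ≤ ∫ u in Set.Iic t, rho V b c u := by
  have hVc := cont_of_classC hV
  set Z : ℝ := ∫ s : ℝ, Real.exp (-(V (s - b) + V (c - s))) with hZdef
  set Z' : ℝ := ∫ s : ℝ, Real.exp (-(V (s - b') + V (c' - s))) with hZ'def
  have hZ : 0 < Z := Z_pos hV b c
  have hZ' : 0 < Z' := Z_pos hV b' c'
  set L : ℝ := Real.log Z' - Real.log Z with hLdef
  set g : ℝ → ℝ := fun u => (V (u - b) + V (c - u)) - (V (u - b') + V (c' - u)) with hgdef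
  -- monotonicity of g
  have hgmono : Monotone g := by
    intro u v huv
    simp only [hgdef]
    have e1 : u - b = (u - b') + (b' - b) := by ring
    have e2 : v - b = (v - b') + (b' - b) := by ring
    have e3 : c' - u = (c - u) + (c' - c) := by ring
    have e4 : c' - v = (c - v) + (c' - c) := by ring
    have i1 : V ((u - b') + (b' - b)) - V (u - b') ≤ V ((v - b') + (b' - b)) - V (v - b') :=
      convex_increment hV.convex (by linarith) (by linarith)
    have i2 : V ((c - v) + (c' - c)) - V (c - v) ≤ V ((c - u) + (c' - c)) - V (c - u) :=
      convex_increment hV.convex (by linarith) (by linarith)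
    rw [e1, e2, e3, e4]
    linarith
  -- continuity of g
  have hgcont : Continuous g := by
    simp only [hgdef]
    exact ((hVc.comp (continuous_id.sub continuous_const)).add
      (hVc.comp (continuous_const.sub continuous_id))).sub
      ((hVc.comp (continuous_id.sub continuous_const)).add
      (hVc.comp (continuous_const.sub continuous_id)))
  -- key characterizations
  have key1 : ∀ u, (rho V b' c' u ≤ rho V b c u ↔ g u ≤ L) := by
    intro u
    unfold rho
    rw [← hZdef, ← hZ'def, div_le_div_iff₀ hZ' hZ,
      ← Real.log_le_log_iff (by positivity) (by positivity),
      Real.log_mul (exp_pos _).ne' hZ.ne', Real.log_mul (exp_pos _).ne' hZ'.ne',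
      Real.log_exp, Real.log_exp]
    constructor <;> intro h <;> simp only [hgdef, hLdef] at * <;> linarith
  have key2 : ∀ u, (rho V b c u ≤ rho V b' c' u ↔ L ≤ g u) := by
    intro u
    unfold rho
    rw [← hZdef, ← hZ'def, div_le_div_iff₀ hZ hZ',
      ← Real.log_le_log_iff (by positivity) (by positivity),
      Real.log_mul (exp_pos _).ne' hZ'.ne', Real.log_mul (exp_pos _).ne' hZ.ne',
      Real.log_exp, Real.log_exp]
    constructor <;> intro h <;> simp only [hgdef, hLdef] at * <;> linarith
  have part1 : ∃ u₀ : ℝ, (∀ u : ℝ, u ≤ u₀ → rho V b' c' u ≤ rho V b c u) ∧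
      (∀ u : ℝ, u₀ ≤ u → rho V b c u ≤ rho V b' c' u) := by
    by_cases hA1 : ∀ u, g u ≤ L
    · -- ρ' ≤ ρ everywhere, hence equal
      have heq := eq_of_pointwise_le hV b c b' c' (fun u => (key1 u).mpr (hA1 u))
      exact ⟨0, fun u _ => (heq u).ge, fun u _ => (heq u).le⟩
    · by_cases hA2 : ∀ u, L ≤ g u
      · have heq := eq_of_pointwise_le hV b' c' b c (fun u => (key2 u).mpr (hA2 u))
        exact ⟨0, fun u _ => (heq u).le, fun u _ => (heq u).ge⟩
      · push_neg at hA1 hA2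
        obtain ⟨a, ha⟩ := hA1
        obtain ⟨e, he⟩ := hA2
        set A : Set ℝ := {u | g u ≤ L} with hAdef
        have hAne : A.Nonempty := ⟨e, he.le⟩
        have hAbdd : BddAbove A := by
          refine ⟨a, fun u hu => ?_⟩
          by_contra hua
          push_neg at hua
          exact absurd (hgmono hua.le) (by simp only [hAdef, Set.mem_setOf_eq] at hu; linarith)
        have hAclosed : IsClosed A := isClosed_le hgcont continuous_const
        set u₀ : ℝ := sSup A with hu₀def
        have hu₀mem : u₀ ∈ A := hAclosed.csSup_mem hAne hAbdd
        have hu₀le : g u₀ ≤ L := hu₀mem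
        have hge : L ≤ g u₀ := by
          by_contra hlt
          push_neg at hlt
          have hopen : IsOpen {x : ℝ | g x < L} := isOpen_lt hgcont continuous_const
          have hnhds : {x : ℝ | g x < L} ∈ nhds u₀ := hopen.mem_nhds hlt
          have hfreq : ∀ᶠ x in nhdsWithin u₀ (Set.Ioi u₀), g x < L :=
            eventually_nhdsWithin_of_eventually_nhds (eventually_of_mem hnhds fun x hx => hx)
          obtain ⟨x, hx1, hx2⟩ := (hfreq.and self_mem_nhdsWithin).exists
          have : x ∈ A := hx1.le
          exact absurd (le_csSup hAbdd this) (not_le.mpr hx2)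
        refine ⟨u₀, fun u hu => (key1 u).mpr ((hgmono hu).trans hu₀le),
          fun u hu => (key2 u).mpr (hge.trans (hgmono hu))⟩
  refine ⟨part1, ?_⟩
  obtain ⟨u₀, h1, h2⟩ := part1
  intro t
  have hint := integrable_rho hV b c
  have hint' := integrable_rho hV b' c'
  rcases le_total t u₀ with ht | ht
  · exact setIntegral_mono_on hint'.integrableOn hint.integrableOn measurableSet_Iic
      fun u hu => h1 u ((Set.mem_Iic.mp hu).trans ht)
  · have e1 : (∫ u in Set.Iic t, rho V b c u) + ∫ u in Set.Ioi t, rho V b c u = 1 := by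
      rw [intervalIntegral.integral_Iic_add_Ioi hint.integrableOn hint.integrableOn, integral_rho_one hV]
    have e2 : (∫ u in Set.Iic t, rho V b' c' u) + ∫ u in Set.Ioi t, rho V b' c' u = 1 := by
      rw [intervalIntegral.integral_Iic_add_Ioi hint'.integrableOn hint'.integrableOn, integral_rho_one hV]
    have e3 : (∫ u in Set.Ioi t, rho V b c u) ≤ ∫ u in Set.Ioi t, rho V b' c' u :=
      setIntegral_mono_on hint.integrableOn hint'.integrableOn measurableSet_Ioi
        fun u hu => h2 u (ht.trans (Set.mem_Ioi.mp hu).le)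
    linarith

end
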